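/- Let A be a nonzero commutative ring and let F ∈ A[x] be a monic polynomial such that for every maximal ideal m of A the image of F in (A/m)[x] is separable. Then B := A[x]/(F) is a finite étale A-algebra: B is a finite A-module (free of rank deg F), and the A-algebra B is étale, i.e. flat, of finite presentation, and formally étale (equivalently, formally unramified and formally smooth). -/

import Mathlib

open Polynomial

/-- If the reduction of the monic polynomial `F` modulo every maximal ideal of `A` is
separable, then the derivative of `F` evaluated at the root is a unit in `A[x]/(F)`. -/
lemma aux_isUnit_mk_derivative
    {A : Type*} [CommRing A] [Nontrivial A] (F : Polynomial A) (hF : F.Monic)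
    (hsep : ∀ m : Ideal A, m.IsMaximal → (F.map (Ideal.Quotient.mk m)).Separable) :
    IsUnit (AdjoinRoot.mk F (derivative F)) := by
  have hfin : Module.Finite A (AdjoinRoot F) :=
    Module.Finite.of_basis (AdjoinRoot.powerBasis' hF).basis
  by_contra h
  obtain ⟨n, hn, hmem⟩ := exists_max_ideal_of_mem_nonunits h
  have hint : Algebra.IsIntegral A (AdjoinRoot F) := Algebra.IsIntegral.of_finite A _
  have hm : (n.comap (algebraMap A (AdjoinRoot F))).IsMaximal :=
    Ideal.isMaximal_comap_of_isIntegral_of_isMaximal n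
  set m := n.comap (algebraMap A (AdjoinRoot F)) with hm_def
  -- from separability, get a Bézout relation mod `m`
  obtain ⟨u, v, huv⟩ := hsep m hm
  obtain ⟨U, hU⟩ := Polynomial.map_surjective _ Ideal.Quotient.mk_surjective u
  obtain ⟨V, hV⟩ := Polynomial.map_surjective _ Ideal.Quotient.mk_surjective v
  set P : Polynomial A := U * F + V * derivative F - 1 with hP
  have hPmap : P.map (Ideal.Quotient.mk m) = 0 := by
    simp only [hP, Polynomial.map_sub, Polynomial.map_add, Polynomial.map_mul, hU, hV,
      Polynomial.map_one]
    rw [sub_eq_zero, ← derivative_map]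
    exact huv
  have hcoeff : ∀ i, P.coeff i ∈ m := by
    intro i
    have := congrArg (fun q => Polynomial.coeff q i) hPmap
    simpa [Polynomial.coeff_map, Ideal.Quotient.eq_zero_iff_mem] using this
  -- the image of `P` in the residue field `B ⧸ n` is zero
  have hPzero : Ideal.Quotient.mk n (AdjoinRoot.mk F P) = 0 := by
    rw [← AdjoinRoot.aeval_eq]
    have : (Ideal.Quotient.mk n) (aeval (AdjoinRoot.root F) P)
        = aeval (Ideal.Quotient.mk n (AdjoinRoot.root F)) P := by
      exact (aeval_algHom_apply (Ideal.Quotient.mkₐ A n) (AdjoinRoot.root F) P).symm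
    rw [this, Polynomial.aeval_eq_sum_range]
    apply Finset.sum_eq_zero
    intro i _
    have : algebraMap A (AdjoinRoot F ⧸ n) (P.coeff i) = 0 := by
      have h1 : algebraMap A (AdjoinRoot F ⧸ n) (P.coeff i)
          = Ideal.Quotient.mk n (algebraMap A (AdjoinRoot F) (P.coeff i)) := rfl
      rw [h1, Ideal.Quotient.eq_zero_iff_mem]
      exact hcoeff i
    rw [Algebra.smul_def, this, zero_mul]
  -- but this image equals `-1`, contradiction
  have h1 : Ideal.Quotient.mk n (AdjoinRoot.mk F P) = -1 := by
    have hF0 : AdjoinRoot.mk F F = 0 := AdjoinRoot.mk_self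
    have hd : Ideal.Quotient.mk n (AdjoinRoot.mk F (derivative F)) = 0 :=
      Ideal.Quotient.eq_zero_iff_mem.mpr hmem
    simp only [hP, map_sub, map_add, map_mul, map_one, hF0, mul_zero, hd, zero_add]
    ring
  rw [hPzero] at h1
  have : (1 : AdjoinRoot F ⧸ n) = 0 := by
    have := h1.symm
    simpa using congrArg Neg.neg this
  exact one_ne_zero this

/-- **Fibrewise separable monic polynomials give finite étale algebras.**
Let `A` be a nonzero commutative ring and `F ∈ A[x]` a monic polynomial whose reduction
modulo every maximal ideal of `A` is separable. Then `B := A[x]/(F)` is a finite étale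
`A`-algebra: it is a finite `A`-module, free of rank `deg F`, and it is flat, of finite
presentation and formally étale over `A`. -/
theorem adjoinRoot_finite_etale_of_separable_fibres
    {A : Type*} [CommRing A] [Nontrivial A] (F : Polynomial A) (hF : F.Monic)
    (hsep : ∀ m : Ideal A, m.IsMaximal → (F.map (Ideal.Quotient.mk m)).Separable) :
    Module.Finite A (AdjoinRoot F) ∧
    Module.Free A (AdjoinRoot F) ∧
    Module.finrank A (AdjoinRoot F) = F.natDegree ∧
    Module.Flat A (AdjoinRoot F) ∧
    Algebra.FinitePresentation A (AdjoinRoot F) ∧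
    Algebra.FormallyEtale A (AdjoinRoot F) := by
  have pb := AdjoinRoot.powerBasis' hF
  have hfin : Module.Finite A (AdjoinRoot F) := Module.Finite.of_basis pb.basis
  have hfree : Module.Free A (AdjoinRoot F) := Module.Free.of_basis pb.basis
  have hrank : Module.finrank A (AdjoinRoot F) = F.natDegree := by
    rw [Module.finrank_eq_card_basis (AdjoinRoot.powerBasis' hF).basis]
    exact Fintype.card_fin _
  have hflat : Module.Flat A (AdjoinRoot F) := Module.Flat.of_free
  have hfp : Algebra.FinitePresentation A (AdjoinRoot F) :=
    Algebra.FinitePresentation.quotient (⟨{F}, by simp⟩)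
  have hunit : IsUnit (AdjoinRoot.mk F (derivative F)) :=
    aux_isUnit_mk_derivative F hF hsep
  refine ⟨hfin, hfree, hrank, hflat, hfp, ?_⟩
  rw [Algebra.FormallyEtale.iff_comp_bijective]
  intro B _ _ I hI
  have hsq : ∀ x ∈ I, x ^ 2 = 0 := by
    intro x hx
    rw [← Ideal.mem_bot, ← hI]
    exact Ideal.pow_mem_pow hx 2
  constructor
  · -- injectivity (formally unramified)
    intro g₁ g₂ hg
    have hδ : g₁ (AdjoinRoot.root F) - g₂ (AdjoinRoot.root F) ∈ I := by
      rw [← Ideal.Quotient.eq_zero_iff_mem, map_sub, sub_eq_zero]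
      exact congrArg (fun h => h (AdjoinRoot.root F)) hg
    set δ := g₁ (AdjoinRoot.root F) - g₂ (AdjoinRoot.root F) with hδdef
    set x := g₂ (AdjoinRoot.root F) with hx
    have haev : ∀ g : AdjoinRoot F →ₐ[A] B, aeval (g (AdjoinRoot.root F)) F = 0 := by
      intro g
      rw [aeval_algHom_apply, AdjoinRoot.aeval_eq, AdjoinRoot.mk_self, map_zero]
    have h0 : (0 : B) = aeval x F + eval x (Polynomial.map (algebraMap A B) (derivative F)) * δ := by
      have : g₁ (AdjoinRoot.root F) = x + δ := by rw [hδdef]; ring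
      have h1 := haev g₁
      rw [this] at h1
      rw [← eval_map_algebraMap] at h1
      rw [Polynomial.eval_add_of_sq_eq_zero _ _ _ (hsq δ hδ)] at h1
      rw [← h1, eval_map_algebraMap, derivative_map]
    have hxF : aeval x F = 0 := haev g₂
    rw [hxF, zero_add] at h0
    have hud : IsUnit (eval x (Polynomial.map (algebraMap A B) (derivative F))) := by
      have : eval x (Polynomial.map (algebraMap A B) (derivative F))
          = g₂ (AdjoinRoot.mk F (derivative F)) := by
        rw [eval_map_algebraMap, ← AdjoinRoot.aeval_eq, aeval_algHom_apply]
      rw [this]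
      exact hunit.map g₂
    have hδ0 : δ = 0 := by
      have := h0.symm
      exact (hud.mul_right_eq_zero).mp this
    apply AdjoinRoot.algHom_ext
    rw [show g₁ (AdjoinRoot.root F) = x + δ by rw [hδdef]; ring, hδ0, add_zero]
  · -- surjectivity (formally smooth)
    intro f
    obtain ⟨x, hx⟩ := Ideal.Quotient.mk_surjective (f (AdjoinRoot.root F))
    have hxF : aeval x F ∈ I := by
      rw [← Ideal.Quotient.eq_zero_iff_mem]
      have : Ideal.Quotient.mk I (aeval x F) = aeval (Ideal.Quotient.mk I x) F :=
        (aeval_algHom_apply (Ideal.Quotient.mkₐ A I) x F).symm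
      rw [this, hx, aeval_algHom_apply, AdjoinRoot.aeval_eq, AdjoinRoot.mk_self, map_zero]
    have hud : IsUnit (aeval x (derivative F)) := by
      have hq : Ideal.Quotient.mk I (aeval x (derivative F))
          = f (AdjoinRoot.mk F (derivative F)) := by
        have : Ideal.Quotient.mk I (aeval x (derivative F))
            = aeval (Ideal.Quotient.mk I x) (derivative F) :=
          (aeval_algHom_apply (Ideal.Quotient.mkₐ A I) x (derivative F)).symm
        rw [this, hx, ← AdjoinRoot.aeval_eq, aeval_algHom_apply]
      have hnil : IsNilpotent I := ⟨2, hI⟩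
      refine (IsNilpotent.isUnit_quotient_mk_iff hnil).mp ?_
      rw [hq]
      exact hunit.map f
    obtain ⟨u, hu⟩ := hud
    set ε : B := -(aeval x F) * (↑u⁻¹ : B) with hε
    have hεI : ε ∈ I := by
      rw [hε]
      exact I.mul_mem_right _ (I.neg_mem hxF)
    have hroot : aeval (x + ε) F = 0 := by
      rw [← eval_map_algebraMap]
      rw [Polynomial.eval_add_of_sq_eq_zero _ _ _ (hsq ε hεI)]
      rw [eval_map_algebraMap, derivative_map, eval_map_algebraMap, hε]
      have : aeval x (derivative F) * (-aeval x F * ↑u⁻¹)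
          = -(aeval x F) * (↑u * ↑u⁻¹) := by rw [hu]; ring
      rw [this, Units.mul_inv, mul_one]
      ring
    refine ⟨AdjoinRoot.liftAlgHom F (Algebra.ofId A B) (x + ε) hroot, ?_⟩
    apply AdjoinRoot.algHom_ext
    have : (Ideal.Quotient.mkₐ A I).comp (AdjoinRoot.liftAlgHom F (Algebra.ofId A B) (x + ε) hroot)
        (AdjoinRoot.root F) = Ideal.Quotient.mk I (x + ε) := by
      simp [AdjoinRoot.liftAlgHom_root]
      exact congrArg _ (AdjoinRoot.liftAlgHom_root F (Algebra.ofId A B) (x + ε) hroot)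
    rw [this, map_add, hx, show Ideal.Quotient.mk I ε = 0 from
      Ideal.Quotient.eq_zero_iff_mem.mpr hεI, add_zero]
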